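/- PSD ⊊ PSD[O] ⊊ PSD[T,O], PSD ⊊ PSD[T] ⊊ PSD[T,O], PSD[O] \ PSD[T] ≠ ∅, and PSD[T] \ PSD[O] ≠ ∅, where PSD, PSD[O], PSD[T], PSD[T,O] denote the classes of indexed families learnable in the respective polynomial-size-dataset models. -/

import Mathlib

/-!
Common framework: indexed families of c.e. sets, enumerations (texts),
learning machines with run-time, membership-oracle machines, teachers,
and the learning criteria PRT/PSD/PMC/PCS with oracle/teacher variants.
-/

namespace TeachLearn

attribute [local instance] Classical.propDecidable

/-- The initial segment (finite string) of length `n` of the infinite sequence `f`. -/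
def str (f : ℕ → ℕ) (n : ℕ) : List ℕ := (List.range n).map f

/-- `f` is an enumeration (a text) of the set `A`: its set of values is exactly `A`. -/
def IsEnum (f : ℕ → ℕ) (A : Set ℕ) : Prop := Set.range f = A

/-- An indexed family: a uniformly computably enumerable sequence of nonempty
subsets of `ℕ`. -/
structure IndexedFamily where
  F : ℕ → Set ℕ
  nonempty : ∀ n, (F n).Nonempty
  uce : REPred fun p : ℕ × ℕ => p.1 ∈ F p.2

namespace IndexedFamily

/-- `A` is a member of the indexed family `𝓕`. -/
def Mem (𝓕 : IndexedFamily) (A : Set ℕ) : Prop := ∃ n, 𝓕.F n = A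

/-- The minimal index of `A` in the indexed family `𝓕`. -/
noncomputable def mi (𝓕 : IndexedFamily) (A : Set ℕ) : ℕ := sInf {n | 𝓕.F n = A}

end IndexedFamily

/-- A learning machine: a partial computable map from finite strings to
hypotheses, together with a (cumulative) run-time function.  The run-time is
defined exactly when the machine halts, dominates the length of the input read
as well as the size of the output produced, and is monotone along prefixes
(time is accumulated while reading an enumeration). -/
structure Machine where
  eval : List ℕ →. ℕ
  partrec : Partrec eval
  time : List ℕ →. ℕ
  time_dom : ∀ σ, (time σ).Dom ↔ (eval σ).Dom
  length_le_time : ∀ ⦃σ t⦄, t ∈ time σ → σ.length ≤ t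
  size_le_time : ∀ ⦃σ t h⦄, t ∈ time σ → h ∈ eval σ → Nat.size h ≤ t
  time_mono : ∀ ⦃σ τ s t⦄, σ <+: τ → s ∈ time σ → t ∈ time τ → s ≤ t

/-- A teacher: a computable, prefix-monotone map on finite strings whose
output consists of elements of its input. -/
structure Teacher where
  t : List ℕ → List ℕ
  computable : Computable t
  mono : ∀ ⦃σ τ⦄, σ <+: τ → t σ <+: t τ
  content_sub : ∀ ⦃σ x⦄, x ∈ t σ → x ∈ σ

/-- A learning machine with access to a membership oracle, modeled
interactively: `step (σ, ans)` is the machine's action on input string `σ`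
after having received the list `ans` of oracle answers so far; an even value
`2 * q` asks the oracle whether `q` belongs to the target, while an odd value
`2 * h + 1` halts the interaction with hypothesis `h`.  The run-time dominates
the length of the input read, the number of oracle queries asked, and the size
of the value produced, and is monotone (cumulative). -/
structure OMachine where
  step : List ℕ × List Bool →. ℕ
  partrec : Partrec step
  time : List ℕ × List Bool →. ℕ
  time_dom : ∀ x, (time x).Dom ↔ (step x).Dom
  length_le_time : ∀ ⦃x t⦄, t ∈ time x → x.1.length ≤ t
  queries_le_time : ∀ ⦃x t⦄, t ∈ time x → x.2.length ≤ t
  size_le_time : ∀ ⦃x t v⦄, t ∈ time x → v ∈ step x → Nat.size v ≤ t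
  time_mono : ∀ ⦃σ τ a b s t⦄, σ <+: τ → a <+: b →
    s ∈ time (σ, a) → t ∈ time (τ, b) → s ≤ t

namespace OMachine

/-- The answer lists reachable in the interaction of the machine `M` with the
membership oracle for `A` on the input string `σ`. -/
inductive Reach (M : OMachine) (A : Set ℕ) (σ : List ℕ) : List Bool → Prop
  | nil : Reach M A σ []
  | query {ans q} : Reach M A σ ans → (2 * q) ∈ M.step (σ, ans) →
      Reach M A σ (ans ++ [decide (q ∈ A)])

/-- `M.Out A σ h ans`: on input `σ`, interacting with the membership oracle
for `A`, the machine `M` receives the oracle answers `ans` and halts with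
hypothesis `h`. -/
def Out (M : OMachine) (A : Set ℕ) (σ : List ℕ) (h : ℕ) (ans : List Bool) : Prop :=
  M.Reach A σ ans ∧ (2 * h + 1) ∈ M.step (σ, ans)

/-- With oracle `A`, on the stage inputs `I`, the machine `M` outputs the
hypothesis `h` from stage `n` onwards. -/
def Settles (M : OMachine) (A : Set ℕ) (I : ℕ → List ℕ) (h n : ℕ) : Prop :=
  ∀ m, n ≤ m → ∃ ans, M.Out A (I m) h ans

end OMachine

/-- A teacher for the teacher-and-oracle model: it additionally has access to
the oracle answers received so far by the learner. -/
structure OTeacher where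
  t : List ℕ → List Bool → List ℕ
  computable : Computable₂ t
  mono : ∀ ⦃σ τ a b⦄, σ <+: τ → a <+: b → t σ a <+: t τ b
  content_sub : ∀ ⦃σ a x⦄, x ∈ t σ a → x ∈ σ

/-- On the stage inputs `I`, the machine `M` outputs the hypothesis `h` from
stage `n` onwards. -/
def Machine.Settles (M : Machine) (I : ℕ → List ℕ) (h n : ℕ) : Prop :=
  ∀ m, n ≤ m → M.eval (I m) = Part.some h

/-- Settling for the teacher-and-oracle model: `hist m` records the oracle
answers the learner received at stage `m - 1`, which the teacher sees at
stage `m`.  From stage `n` on, the learner outputs `h`. -/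
def OMachine.TOSettles (M : OMachine) (T : OTeacher) (A : Set ℕ) (f : ℕ → ℕ)
    (hist : ℕ → List Bool) (h n : ℕ) : Prop :=
  ∀ m, n ≤ m → M.Out A (T.t (str f m) (hist m)) h (hist (m + 1))

/-! ### Polynomial run-time (PRT) -/

/-- `M` converges to the hypothesis `h` on the stage inputs `I` within fewer
than `B` computation steps. -/
def Machine.PRTIdentifies (M : Machine) (I : ℕ → List ℕ) (h B : ℕ) : Prop :=
  ∃ n, M.Settles I h n ∧ ∃ t, t ∈ M.time (I n) ∧ t < B

/-- Oracle version of `Machine.PRTIdentifies`; the run-time bound also bounds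
the oracle use (by `queries_le_time`). -/
def OMachine.PRTIdentifies (M : OMachine) (A : Set ℕ) (I : ℕ → List ℕ) (h B : ℕ) : Prop :=
  ∃ n, M.Settles A I h n ∧
    ∃ ans t, M.Out A (I n) h ans ∧ t ∈ M.time (I n, ans) ∧ t < B

/-- `M` PRT-learns `𝓕` with polynomial bound `p`. -/
def PRTLearnsWith (M : Machine) (p : Polynomial ℕ) (𝓕 : IndexedFamily) : Prop :=
  ∀ A, 𝓕.Mem A → ∀ f, IsEnum f A →
    ∃ h, 𝓕.F h = A ∧ M.PRTIdentifies (str f) h (p.eval (𝓕.mi A))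

/-- `𝓕` is PRT-learnable. -/
def PRT (𝓕 : IndexedFamily) : Prop := ∃ M p, PRTLearnsWith M p 𝓕

/-- The learner-teacher pair `(M, T)` PRT-learns `𝓕` with polynomial bound `p`. -/
def PRTTLearnsWith (M : Machine) (T : Teacher) (p : Polynomial ℕ) (𝓕 : IndexedFamily) : Prop :=
  ∀ A, 𝓕.Mem A → ∀ f, IsEnum f A →
    ∃ h, 𝓕.F h = A ∧ M.PRTIdentifies (fun m => T.t (str f m)) h (p.eval (𝓕.mi A))

/-- `𝓕` is PRT[T]-learnable. -/
def PRTT (𝓕 : IndexedFamily) : Prop := ∃ M T p, PRTTLearnsWith M T p 𝓕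

/-- `𝓕` is PRT[O]-learnable. -/
def PRTO (𝓕 : IndexedFamily) : Prop :=
  ∃ (M : OMachine) (p : Polynomial ℕ), ∀ A, 𝓕.Mem A → ∀ f, IsEnum f A →
    ∃ h, 𝓕.F h = A ∧ M.PRTIdentifies A (str f) h (p.eval (𝓕.mi A))

/-- `𝓕` is PRT[T,O]-learnable. -/
def PRTTO (𝓕 : IndexedFamily) : Prop :=
  ∃ (M : OMachine) (T : OTeacher) (p : Polynomial ℕ),
    ∀ A, 𝓕.Mem A → ∀ f, IsEnum f A →
      ∃ h, 𝓕.F h = A ∧ ∃ hist : ℕ → List Bool, hist 0 = [] ∧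
        ∃ n, M.TOSettles T A f hist h n ∧
          ∃ t, t ∈ M.time (T.t (str f n) (hist n), hist (n + 1)) ∧ t < p.eval (𝓕.mi A)

/-! ### Polynomial size dataset (PSD) -/

/-- `M` converges to `h` on an initial stage whose input contains fewer than
`B` distinct elements. -/
def Machine.PSDIdentifies (M : Machine) (I : ℕ → List ℕ) (h B : ℕ) : Prop :=
  ∃ n, M.Settles I h n ∧ (I n).toFinset.card < B

/-- Oracle version of `Machine.PSDIdentifies`; the oracle use is also bounded. -/
def OMachine.PSDIdentifies (M : OMachine) (A : Set ℕ) (I : ℕ → List ℕ) (h B : ℕ) : Prop :=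
  ∃ n, M.Settles A I h n ∧ (I n).toFinset.card < B ∧
    ∃ ans, M.Out A (I n) h ans ∧ ans.length ≤ B

/-- `𝓕` is PSD-learnable. -/
def PSD (𝓕 : IndexedFamily) : Prop :=
  ∃ (M : Machine) (p : Polynomial ℕ), ∀ A, 𝓕.Mem A → ∀ f, IsEnum f A →
    ∃ h, 𝓕.F h = A ∧ M.PSDIdentifies (str f) h (p.eval (𝓕.mi A))

/-- `𝓕` is PSD[T]-learnable. -/
def PSDT (𝓕 : IndexedFamily) : Prop :=
  ∃ (M : Machine) (T : Teacher) (p : Polynomial ℕ), ∀ A, 𝓕.Mem A → ∀ f, IsEnum f A →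
    ∃ h, 𝓕.F h = A ∧ M.PSDIdentifies (fun m => T.t (str f m)) h (p.eval (𝓕.mi A))

/-- `𝓕` is PSD[O]-learnable. -/
def PSDO (𝓕 : IndexedFamily) : Prop :=
  ∃ (M : OMachine) (p : Polynomial ℕ), ∀ A, 𝓕.Mem A → ∀ f, IsEnum f A →
    ∃ h, 𝓕.F h = A ∧ M.PSDIdentifies A (str f) h (p.eval (𝓕.mi A))

/-- `𝓕` is PSD[T,O]-learnable. -/
def PSDTO (𝓕 : IndexedFamily) : Prop :=
  ∃ (M : OMachine) (T : OTeacher) (p : Polynomial ℕ),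
    ∀ A, 𝓕.Mem A → ∀ f, IsEnum f A →
      ∃ h, 𝓕.F h = A ∧ ∃ hist : ℕ → List Bool, hist 0 = [] ∧
        ∃ n, M.TOSettles T A f hist h n ∧
          (T.t (str f n) (hist n)).toFinset.card < p.eval (𝓕.mi A) ∧
          (hist (n + 1)).length ≤ p.eval (𝓕.mi A)

/-! ### Polynomial mind-changes (PMC) -/

/-- The set of positions at which the hypothesis stream `g` changes its mind. -/
def MindChanges (g : ℕ → ℕ) : Set ℕ := {i | g i ≠ g (i + 1)}

/-- The hypothesis stream `g` changes its mind at most `B` times, and the only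
hypothesis appearing infinitely often in it is an index of `A` in `𝓕`. -/
def PMCCriterion (𝓕 : IndexedFamily) (A : Set ℕ) (g : ℕ → ℕ) (B : ℕ) : Prop :=
  (MindChanges g).Finite ∧ (MindChanges g).ncard ≤ B ∧
    ∀ h, {i | g i = h}.Infinite → 𝓕.F h = A

/-- `𝓕` is PMC-learnable. -/
def PMC (𝓕 : IndexedFamily) : Prop :=
  ∃ (M : Machine) (p : Polynomial ℕ), ∀ A, 𝓕.Mem A → ∀ f, IsEnum f A →
    ∃ g : ℕ → ℕ, (∀ m, M.eval (str f m) = Part.some (g m)) ∧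
      PMCCriterion 𝓕 A g (p.eval (𝓕.mi A))

/-- `𝓕` is PMC[T]-learnable. -/
def PMCT (𝓕 : IndexedFamily) : Prop :=
  ∃ (M : Machine) (T : Teacher) (p : Polynomial ℕ), ∀ A, 𝓕.Mem A → ∀ f, IsEnum f A →
    ∃ g : ℕ → ℕ, (∀ m, M.eval (T.t (str f m)) = Part.some (g m)) ∧
      PMCCriterion 𝓕 A g (p.eval (𝓕.mi A))

/-- `𝓕` is PMC[O]-learnable. -/
def PMCO (𝓕 : IndexedFamily) : Prop :=
  ∃ (M : OMachine) (p : Polynomial ℕ), ∀ A, 𝓕.Mem A → ∀ f, IsEnum f A →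
    ∃ g : ℕ → ℕ,
      (∀ m, ∃ ans, M.Out A (str f m) (g m) ans ∧ ans.length ≤ p.eval (𝓕.mi A)) ∧
      PMCCriterion 𝓕 A g (p.eval (𝓕.mi A))

/-- `𝓕` is PMC[T,O]-learnable. -/
def PMCTO (𝓕 : IndexedFamily) : Prop :=
  ∃ (M : OMachine) (T : OTeacher) (p : Polynomial ℕ),
    ∀ A, 𝓕.Mem A → ∀ f, IsEnum f A →
      ∃ hist : ℕ → List Bool, hist 0 = [] ∧
        ∃ g : ℕ → ℕ,
          (∀ m, M.Out A (T.t (str f m) (hist m)) (g m) (hist (m + 1)) ∧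
            (hist (m + 1)).length ≤ p.eval (𝓕.mi A)) ∧
          PMCCriterion 𝓕 A g (p.eval (𝓕.mi A))

/-! ### Polynomial size characteristic sample (PCS) -/

/-- `𝓕` is PCS-learnable: there are a machine, a polynomial bound and an
assignment of a characteristic sample to each member of `𝓕`. -/
def PCS (𝓕 : IndexedFamily) : Prop :=
  ∃ (M : Machine) (p : Polynomial ℕ) (S : Set ℕ → Finset ℕ),
    ∀ A, 𝓕.Mem A → ↑(S A) ⊆ A ∧ (S A).card < p.eval (𝓕.mi A) ∧
      ∃ e, 𝓕.F e = A ∧ ∀ f, IsEnum f A → ∀ n, (∀ x ∈ S A, x ∈ str f n) →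
        M.eval (str f n) = Part.some e

/-- `𝓕` is PCS[O]-learnable. -/
def PCSO (𝓕 : IndexedFamily) : Prop :=
  ∃ (M : OMachine) (p : Polynomial ℕ) (S : Set ℕ → Finset ℕ),
    ∀ A, 𝓕.Mem A → ↑(S A) ⊆ A ∧ (S A).card < p.eval (𝓕.mi A) ∧
      ∃ e, 𝓕.F e = A ∧ ∀ f, IsEnum f A → ∀ n, (∀ x ∈ S A, x ∈ str f n) →
        ∃ ans, M.Out A (str f n) e ans ∧ ans.length ≤ p.eval (𝓕.mi A)

/-- `𝓕` is PCS[T]-learnable: the characteristic sample must eventually appear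
in the teacher's output stream, after which the learner locks onto a correct
index. -/
def PCST (𝓕 : IndexedFamily) : Prop :=
  ∃ (M : Machine) (T : Teacher) (p : Polynomial ℕ) (S : Set ℕ → Finset ℕ),
    ∀ A, 𝓕.Mem A → ↑(S A) ⊆ A ∧ (S A).card < p.eval (𝓕.mi A) ∧
      ∃ e, 𝓕.F e = A ∧ ∀ f, IsEnum f A →
        (∃ n, ∀ x ∈ S A, x ∈ T.t (str f n)) ∧
        ∀ n, (∀ x ∈ S A, x ∈ T.t (str f n)) → M.eval (T.t (str f n)) = Part.some e

/-- `𝓕` is PCS[T,O]-learnable. -/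
def PCSTO (𝓕 : IndexedFamily) : Prop :=
  ∃ (M : OMachine) (T : OTeacher) (p : Polynomial ℕ) (S : Set ℕ → Finset ℕ),
    ∀ A, 𝓕.Mem A → ↑(S A) ⊆ A ∧ (S A).card < p.eval (𝓕.mi A) ∧
      ∃ e, 𝓕.F e = A ∧ ∀ f, IsEnum f A →
        ∃ hist : ℕ → List Bool, hist 0 = [] ∧
          (∃ n, ∀ x ∈ S A, x ∈ T.t (str f n) (hist n)) ∧
          ∀ n, (∀ x ∈ S A, x ∈ T.t (str f n) (hist n)) →
            M.Out A (T.t (str f n) (hist n)) e (hist (n + 1)) ∧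
            (hist (n + 1)).length ≤ p.eval (𝓕.mi A)


/-! ### Auxiliary generic lemmas -/

lemma str_length (f : ℕ → ℕ) (n : ℕ) : (str f n).length = n := by
  simp [str]

lemma str_prefix (f : ℕ → ℕ) {m n : ℕ} (h : m ≤ n) : str f m <+: str f n := by
  have : List.range m <+: List.range n := by
    refine ⟨(List.range (n - m)).map (m + ·), ?_⟩
    rw [← List.range_add, Nat.add_sub_cancel' h]
  exact this.map f

lemma str_getElem (f : ℕ → ℕ) {n i : ℕ} (h : i < n) :
    (str f n)[i]'(by simpa [str_length] using h) = f i := by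
  simp [str]

lemma mem_str {f : ℕ → ℕ} {n x : ℕ} : x ∈ str f n ↔ ∃ i < n, f i = x := by
  simp [str]

lemma size_le_self (n : ℕ) : Nat.size n ≤ n :=
  Nat.size_le.2 (Nat.lt_two_pow_self)

lemma foldr_max_init_mono {b b' : ℕ} (h : b ≤ b') :
    ∀ (l : List ℕ), l.foldr max b ≤ l.foldr max b'
  | [] => h
  | a :: l => by simpa using max_le_max le_rfl (foldr_max_init_mono h l)

lemma foldr_max_le_of_prefix {σ τ : List ℕ} (h : σ <+: τ) :
    σ.foldr max 0 ≤ τ.foldr max 0 := by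
  obtain ⟨ρ, rfl⟩ := h
  rw [List.foldr_append]
  exact foldr_max_init_mono (Nat.zero_le _) σ

lemma le_foldr_max {σ : List ℕ} {x : ℕ} (h : x ∈ σ) : x ≤ σ.foldr max 0 := by
  induction σ with
  | nil => simp at h
  | cons a l ih =>
    rcases List.mem_cons.1 h with rfl | h
    · simp
    · exact le_trans (ih h) (by simp)

lemma poly_eval_mono (p : Polynomial ℕ) : Monotone fun n : ℕ => p.eval n := by
  induction p using Polynomial.induction_on with
  | C a => simp [monotone_const]
  | add p q hp hq => simpa [Polynomial.eval_add] using hp.add hq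
  | monomial n a _ =>
    intro x y hxy
    simp only [Polynomial.eval_mul, Polynomial.eval_pow, Polynomial.eval_C,
      Polynomial.eval_X]
    exact Nat.mul_le_mul_left _ (Nat.pow_le_pow_left hxy _)

lemma poly_eval_computable (p : Polynomial ℕ) : Computable fun n : ℕ => p.eval n := by
  induction p using Polynomial.induction_on with
  | C a => simpa using Computable.const ((Polynomial.C a).eval 0)
  | add p q hp hq =>
    have := Primrec.nat_add.to_comp.comp hp hq
    simpa [Polynomial.eval_add] using this
  | monomial n a h =>
    have := Primrec.nat_mul.to_comp.comp h Computable.id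
    refine this.of_eq fun x => ?_
    simp only [Polynomial.eval_mul, Polynomial.eval_pow, Polynomial.eval_C,
      Polynomial.eval_X, pow_succ, id]
    ring

/-! ### Lifting machines and the easy inclusions -/

lemma size_double_add_one_le (h t : ℕ) (ht : Nat.size h ≤ t) :
    Nat.size (2 * h + 1) ≤ t + 1 := by
  rw [Nat.size_le]
  calc 2 * h + 1 < 2 * (2 ^ Nat.size h) := by
        have := Nat.lt_size_self h
        omega
    _ ≤ 2 * 2 ^ t := by
        have := Nat.pow_le_pow_right (show 0 < 2 by norm_num) ht
        omega
    _ = 2 ^ (t + 1) := by rw [pow_succ]; ring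

/-- Lift an oracle-free machine to an `OMachine` that never queries. -/
def Machine.lift (M : Machine) : OMachine where
  step := fun x => (M.eval x.1).map fun h => 2 * h + 1
  partrec := (M.partrec.comp Computable.fst).map
    ((Primrec.nat_add.comp (Primrec.nat_mul.comp (Primrec.const 2) Primrec.snd)
      (Primrec.const 1)).to_comp.to₂)
  time := fun x => (M.time x.1).map fun t => t + x.2.length + 1
  time_dom := by
    intro x
    simp only [Part.map_Dom]
    exact M.time_dom x.1
  length_le_time := by
    rintro ⟨σ, a⟩ t ht
    obtain ⟨s, hs, rfl⟩ := (Part.mem_map_iff _).1 ht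
    have := M.length_le_time hs
    omega
  queries_le_time := by
    rintro ⟨σ, a⟩ t ht
    obtain ⟨s, hs, rfl⟩ := (Part.mem_map_iff _).1 ht
    simp only
    omega
  size_le_time := by
    rintro ⟨σ, a⟩ t v ht hv
    obtain ⟨s, hs, rfl⟩ := (Part.mem_map_iff _).1 ht
    obtain ⟨h, hh, rfl⟩ := (Part.mem_map_iff _).1 hv
    have := M.size_le_time hs hh
    have := size_double_add_one_le h s this
    omega
  time_mono := by
    rintro σ τ a b s t hp hab hs ht
    obtain ⟨s', hs', rfl⟩ := (Part.mem_map_iff _).1 hs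
    obtain ⟨t', ht', rfl⟩ := (Part.mem_map_iff _).1 ht
    have := M.time_mono hp hs' ht'
    have := hab.length_le
    show s' + a.length + 1 ≤ t' + b.length + 1
    omega

lemma Machine.lift_out {M : Machine} {A : Set ℕ} {σ : List ℕ} {h : ℕ}
    (hev : M.eval σ = Part.some h) : M.lift.Out A σ h [] := by
  constructor
  · exact OMachine.Reach.nil
  · show _ ∈ (M.eval σ).map _
    rw [hev]
    simp [Part.mem_map_iff]

/-- The identity teacher. -/
def Teacher.idT : Teacher where
  t := id
  computable := Computable.id
  mono := fun _ _ h => h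
  content_sub := fun _ _ h => h

/-- Lift a plain teacher to an `OTeacher` ignoring the oracle answers. -/
def Teacher.lift (T : Teacher) : OTeacher where
  t := fun σ _ => T.t σ
  computable := T.computable.comp Computable.fst |>.to₂
  mono := fun _ _ _ _ h _ => T.mono h
  content_sub := fun _ _ _ h => T.content_sub h

theorem psd_imp_psdo {𝓕 : IndexedFamily} (h : PSD 𝓕) : PSDO 𝓕 := by
  obtain ⟨M, p, hM⟩ := h
  refine ⟨M.lift, p, fun A hA f hf => ?_⟩
  obtain ⟨h, hFh, n, hset, hcard⟩ := hM A hA f hf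
  refine ⟨h, hFh, n, ?_, hcard, [], M.lift_out (hset n le_rfl), by simp⟩
  intro m hm
  exact ⟨[], M.lift_out (hset m hm)⟩

theorem psd_imp_psdt {𝓕 : IndexedFamily} (h : PSD 𝓕) : PSDT 𝓕 := by
  obtain ⟨M, p, hM⟩ := h
  exact ⟨M, Teacher.idT, p, hM⟩

theorem psdt_imp_psdto {𝓕 : IndexedFamily} (h : PSDT 𝓕) : PSDTO 𝓕 := by
  obtain ⟨M, T, p, hM⟩ := h
  refine ⟨M.lift, T.lift, p, fun A hA f hf => ?_⟩
  obtain ⟨h, hFh, n, hset, hcard⟩ := hM A hA f hf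
  refine ⟨h, hFh, fun _ => [], rfl, n, ?_, hcard, by simp⟩
  intro m hm
  exact M.lift_out (hset m hm)

theorem psdo_imp_psdto {𝓕 : IndexedFamily} (h : PSDO 𝓕) : PSDTO 𝓕 := by
  obtain ⟨M, p, hM⟩ := h
  refine ⟨M, Teacher.idT.lift, p, fun A hA f hf => ?_⟩
  obtain ⟨h, hFh, n, hset, hcard, ansB, houtB, hlenB⟩ := hM A hA f hf
  classical
  -- history: at stage `n` use the bounded interaction, later use those from `Settles`.
  have hch : ∀ m, ∃ ans, n ≤ m → M.Out A (str f m) h ans ∧ (m = n → ans.length ≤ p.eval (𝓕.mi A)) := by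
    intro m
    by_cases hm : n ≤ m
    · by_cases hmn : m = n
      · subst hmn
        exact ⟨ansB, fun _ => ⟨houtB, fun _ => hlenB⟩⟩
      · obtain ⟨ans, hans⟩ := hset m hm
        exact ⟨ans, fun _ => ⟨hans, fun hc => absurd hc hmn⟩⟩
    · exact ⟨[], fun hc => absurd hc hm⟩
  choose hist hhist using hch
  refine ⟨h, hFh, fun m => if m = 0 then [] else hist (m - 1), by simp, n, ?_, hcard, ?_⟩
  · intro m hm
    simp only [Nat.succ_ne_zero, if_neg, Nat.add_sub_cancel]
    exact (hhist m hm).1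
  · simp only [Nat.succ_ne_zero, if_neg, Nat.add_sub_cancel]
    exact (hhist n le_rfl).2 rfl

/-! ### The family `𝓖 = {ℕ} ∪ {ℕ \ {k} : k}`: PSD[O]-learnable but not PSD[T]-learnable -/

/-- The family `{ℕ} ∪ {ℕ \ {k}}`. -/
def famG : IndexedFamily where
  F := fun n => match n with
    | 0 => Set.univ
    | (k+1) => {x | x ≠ k}
  nonempty := fun n => by
    match n with
    | 0 => exact ⟨0, trivial⟩
    | (k+1) => exact ⟨k+1, Nat.succ_ne_self k⟩
  uce := by
    apply ComputablePred.to_re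
    apply ComputablePred.computable_iff.2
    refine ⟨fun p => decide (p.2 = 0) || !decide (p.1 = p.2 - 1), ?_, ?_⟩
    · have h1 : Primrec fun p : ℕ × ℕ => decide (p.2 = 0) :=
        (Primrec.eq.comp Primrec.snd (Primrec.const 0)).decide
      have h2 : Primrec fun p : ℕ × ℕ => decide (p.1 = p.2 - 1) :=
        (Primrec.eq.comp Primrec.fst (Primrec.pred.comp Primrec.snd)).decide
      exact (Primrec.cond h1 (Primrec.const true) ((Primrec.not).comp h2)).to_comp.of_eq
        (fun p => by cases hb : (decide (p.2 = 0)) <;> simp [hb])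
    · funext p
      obtain ⟨x, n⟩ := p
      match n with
      | 0 => simp [Set.mem_univ]
      | (k+1) =>
        simp only [Set.mem_setOf_eq]
        by_cases h : x = k <;> simp [h]

lemma famG_zero : famG.F 0 = Set.univ := rfl

lemma famG_succ (k : ℕ) : famG.F (k+1) = {x | x ≠ k} := rfl

lemma famG_eq_univ {h : ℕ} (hh : famG.F h = Set.univ) : h = 0 := by
  match h with
  | 0 => rfl
  | (k+1) =>
    exfalso
    have : k ∈ famG.F (k+1) := hh ▸ trivial
    exact this rfl

lemma famG_eq_ne {h k : ℕ} (hh : famG.F h = {x | x ≠ k}) : h = k + 1 := by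
  match h with
  | 0 =>
    exfalso
    have : k ∈ ({x | x ≠ k} : Set ℕ) := hh ▸ trivial
    exact this rfl
  | (j+1) =>
    by_contra hne
    have hjk : j ≠ k := fun hc => hne (by rw [hc])
    have : k ∈ famG.F (j+1) := Ne.symm hjk
    rw [hh] at this
    exact this rfl

lemma famG_mi_univ : famG.mi Set.univ = 0 :=
  Nat.sInf_eq_zero.2 (Or.inl famG_zero)

lemma famG_mi_ne (k : ℕ) : famG.mi {x | x ≠ k} = k + 1 := by
  have : {n | famG.F n = {x | x ≠ k}} = {k+1} := by
    ext n
    exact ⟨fun hn => famG_eq_ne hn, fun hn => by rw [Set.mem_singleton_iff.1 hn]; rfl⟩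
  rw [IndexedFamily.mi, this, csInf_singleton]

/-- The fold step computing one plus the position of the first `false`. -/
def gstep : (ℕ × ℕ) → Bool → ℕ × ℕ :=
  fun s b => (s.1 + 1, if s.2 ≠ 0 then s.2 else if b then 0 else s.1 + 1)

def ffn (l : List Bool) : ℕ := (l.foldl gstep (0, 0)).2

/-- The output of the `𝓖`-learner. -/
def gOut (σ : List ℕ) (ans : List Bool) : ℕ :=
  if ans.length < σ.length then 2 * ans.length else 2 * ffn ans + 1

lemma gstep_stable : ∀ (l : List Bool) (i r : ℕ), r ≠ 0 →
    l.foldl gstep (i, r) = (i + l.length, r) := by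
  intro l
  induction l with
  | nil => intro i r _; simp
  | cons b l ih =>
    intro i r hr
    simp only [List.foldl_cons, gstep, if_pos hr, List.length_cons]
    rw [ih (i+1) r hr]
    ext <;> simp <;> omega

lemma gstep_alltrue : ∀ (l : List Bool) (i : ℕ), (∀ b ∈ l, b = true) →
    l.foldl gstep (i, 0) = (i + l.length, 0) := by
  intro l
  induction l with
  | nil => intro i _; simp
  | cons b l ih =>
    intro i hb
    have hbt : b = true := hb b (List.mem_cons_self)
    subst hbt
    have h0 : gstep (i, 0) true = (i + 1, 0) := by simp [gstep]
    simp only [List.foldl_cons, h0, List.length_cons]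
    rw [ih (i+1) (fun b hb' => hb b (List.mem_cons_of_mem _ hb'))]
    all_goals (ext <;> simp <;> omega)

lemma gstep_found : ∀ (k m i : ℕ), k < m →
    (((List.range m).map (fun j => decide (j ≠ k))).foldl gstep (i, 0)) = (i + m, i + k + 1) := by
  intro k
  induction k with
  | zero =>
    intro m i hm
    obtain ⟨m', rfl⟩ : ∃ m', m = m' + 1 := ⟨m - 1, by omega⟩
    rw [List.range_succ_eq_map]
    simp only [List.map_cons, List.foldl_cons, List.map_map]
    have : gstep (i, 0) (decide (0 ≠ 0)) = (i + 1, i + 1) := by simp [gstep]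
    rw [this, gstep_stable _ _ _ (by omega)]
    simp
    omega
  | succ k ih =>
    intro m i hm
    obtain ⟨m', rfl⟩ : ∃ m', m = m' + 1 := ⟨m - 1, by omega⟩
    rw [List.range_succ_eq_map]
    simp only [List.map_cons, List.foldl_cons, List.map_map]
    have h0 : gstep (i, 0) (decide (0 ≠ k + 1)) = (i + 1, 0) := by simp [gstep]
    rw [h0]
    have hcomp : ((fun j => decide (j ≠ k + 1)) ∘ Nat.succ) = fun j => decide (j ≠ k) := by
      funext j
      rw [Function.comp_apply, decide_eq_decide]
      omega
    rw [hcomp, ih m' (i+1) (by omega)]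
    all_goals (ext <;> simp <;> omega)

/-- The oracle machine learning `𝓖`. -/
def omG : OMachine where
  step := fun x => Part.some (gOut x.1 x.2)
  partrec := by
    apply Computable.partrec
    have hlen2 : Primrec fun x : List ℕ × List Bool => x.2.length :=
      Primrec.list_length.comp Primrec.snd
    have hlen1 : Primrec fun x : List ℕ × List Bool => x.1.length :=
      Primrec.list_length.comp Primrec.fst
    have hstep : Primrec₂ (fun (_ : List ℕ × List Bool) (y : (ℕ × ℕ) × Bool) => gstep y.1 y.2) := by
      unfold gstep
      have c1 : Primrec fun y : (ℕ × ℕ) × Bool => y.1.1 + 1 :=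
        Primrec.succ.comp (Primrec.fst.comp Primrec.fst)
      have c2 : Primrec fun y : (ℕ × ℕ) × Bool => y.1.2 :=
        Primrec.snd.comp Primrec.fst
      have hc : PrimrecPred fun y : (ℕ × ℕ) × Bool => y.1.2 ≠ 0 :=
        (Primrec.eq.comp c2 (Primrec.const 0)).not
      have c3 : Primrec fun y : (ℕ × ℕ) × Bool =>
          (if y.2 then 0 else y.1.1 + 1) :=
        (Primrec.cond Primrec.snd (Primrec.const 0) c1).of_eq
          (fun y => by cases hy : y.2 <;> simp [hy])
      exact ((Primrec.pair c1 (Primrec.ite hc c2 c3)).comp Primrec.snd).to₂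
    have hffn : Primrec fun x : List ℕ × List Bool => ffn x.2 := by
      have := Primrec.list_foldl (Primrec.snd :
          Primrec fun x : List ℕ × List Bool => x.2)
        (Primrec.const ((0, 0) : ℕ × ℕ)) hstep
      exact Primrec.snd.comp this
    have hout : Primrec fun x : List ℕ × List Bool => gOut x.1 x.2 := by
      unfold gOut
      have hcond : PrimrecPred fun x : List ℕ × List Bool => x.2.length < x.1.length :=
        Primrec.nat_lt.comp hlen2 hlen1
      exact Primrec.ite hcond
        (Primrec.nat_double.comp hlen2)
        (Primrec.succ.comp (Primrec.nat_double.comp hffn))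
    exact hout.to_comp
  time := fun x => Part.some (3 * (x.1.length + x.2.length) + 5)
  time_dom := by intro x; simp
  length_le_time := by
    rintro ⟨σ, a⟩ t ht
    rw [Part.mem_some_iff] at ht
    subst ht
    show σ.length ≤ 3 * (σ.length + a.length) + 5
    omega
  queries_le_time := by
    rintro ⟨σ, a⟩ t ht
    rw [Part.mem_some_iff] at ht
    subst ht
    show a.length ≤ 3 * (σ.length + a.length) + 5
    omega
  size_le_time := by
    rintro ⟨σ, a⟩ t v ht hv
    rw [Part.mem_some_iff] at ht
    rw [Part.mem_some_iff] at hv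
    subst ht; subst hv
    have hsz := size_le_self (gOut σ a)
    have : gOut σ a ≤ 2 * (σ.length + a.length) + 3 := by
      unfold gOut
      split
      · omega
      · have : ffn a ≤ a.length + 1 := by
          have : ∀ (l : List Bool) (i r : ℕ), r ≤ i → (l.foldl gstep (i, r)).2 ≤ i + l.length := by
            intro l
            induction l with
            | nil => intro i r h; simpa using by omega
            | cons b l ih =>
              intro i r h
              simp only [List.foldl_cons, List.length_cons]
              have h2 : (gstep (i, r) b).1 = i + 1 := rfl
              have hr' : (gstep (i, r) b).2 ≤ i + 1 := by
                show (if r ≠ 0 then r else if b then 0 else i + 1) ≤ i + 1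
                split
                · omega
                · split <;> omega
              have h3 := ih (gstep (i, r) b).1 (gstep (i, r) b).2 (by rw [h2]; exact hr')
              have h4 : ((gstep (i, r) b).1, (gstep (i, r) b).2) = gstep (i, r) b := rfl
              rw [h4, h2] at h3
              omega
          have := this a 0 0 le_rfl
          unfold ffn
          omega
        omega
    show Nat.size (gOut σ a) ≤ 3 * (σ.length + a.length) + 5
    omega
  time_mono := by
    rintro σ τ a b s t hp hab hs ht
    rw [Part.mem_some_iff] at hs ht
    subst hs; subst ht
    have h1 := hp.length_le
    have h2 := hab.length_le
    show 3 * (σ.length + a.length) + 5 ≤ 3 * (τ.length + b.length) + 5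
    omega

lemma omG_step (x : List ℕ × List Bool) : omG.step x = Part.some (gOut x.1 x.2) := rfl

/-- The canonical answer string. -/
noncomputable def ansC (A : Set ℕ) (m : ℕ) : List Bool :=
  (List.range m).map fun q => decide (q ∈ A)

lemma omG_reach (A : Set ℕ) (σ : List ℕ) : ∀ j, j ≤ σ.length → omG.Reach A σ (ansC A j) := by
  intro j
  induction j with
  | zero => intro _; exact OMachine.Reach.nil
  | succ j ih =>
    intro hj
    have h1 : omG.Reach A σ (ansC A j) := ih (by omega)
    have h2 : (2 * j) ∈ omG.step (σ, ansC A j) := by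
      rw [omG_step, Part.mem_some_iff]
      unfold gOut
      rw [if_pos (by simp [ansC]; omega)]
      simp [ansC]
    have := OMachine.Reach.query h1 h2
    have he : ansC A (j+1) = ansC A j ++ [decide (j ∈ A)] := by
      unfold ansC
      rw [List.range_succ, List.map_append]
      rfl
    rw [he]
    exact this

lemma omG_out (A : Set ℕ) (σ : List ℕ) :
    omG.Out A σ (ffn (ansC A σ.length)) (ansC A σ.length) := by
  constructor
  · exact omG_reach A σ σ.length le_rfl
  · rw [omG_step, Part.mem_some_iff]
    unfold gOut
    rw [if_neg (by simp [ansC])]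

lemma ffn_univ (m : ℕ) : ffn (ansC Set.univ m) = 0 := by
  unfold ffn
  rw [gstep_alltrue _ 0 (by
    intro b hb
    unfold ansC at hb
    obtain ⟨q, _, rfl⟩ := List.mem_map.1 hb
    simp only [decide_eq_true_eq]
    trivial)]

lemma ffn_ne (k m : ℕ) (h : k < m) : ffn (ansC {x | x ≠ k} m) = k + 1 := by
  unfold ffn
  have : ansC {x | x ≠ k} m = (List.range m).map fun j => decide (j ≠ k) := by
    unfold ansC
    apply List.map_congr_left
    intro q _
    exact decide_eq_decide.2 Iff.rfl
  rw [this, gstep_found k m 0 h]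
  simp

lemma psdo_famG : PSDO famG := by
  refine ⟨omG, Polynomial.X + Polynomial.C 2, ?_⟩
  have hpev : ∀ n, (Polynomial.X + Polynomial.C 2 : Polynomial ℕ).eval n = n + 2 := by
    intro n; simp
  intro A hA f hf
  obtain ⟨e, hFe⟩ := hA
  match e, hFe with
  | 0, hFe =>
    -- A = univ
    rw [famG_zero] at hFe
    subst hFe
    refine ⟨0, famG_zero, 0, ?_, ?_, ?_⟩
    · intro m _
      have := omG_out Set.univ (str f m)
      rw [ffn_univ] at this
      exact ⟨_, this⟩
    · rw [famG_mi_univ, hpev]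
      simp [str]
    · have := omG_out Set.univ (str f 0)
      rw [ffn_univ] at this
      refine ⟨_, this, ?_⟩
      rw [famG_mi_univ, hpev]
      simp [ansC, str]
  | (k+1), hFe =>
    rw [famG_succ] at hFe
    subst hFe
    rw [famG_mi_ne, hpev]
    refine ⟨k+1, famG_succ k, k+1, ?_, ?_, ?_⟩
    · intro m hm
      have := omG_out {x | x ≠ k} (str f m)
      rw [str_length, ffn_ne k m (by omega)] at this
      exact ⟨_, this⟩
    · calc (str f (k+1)).toFinset.card ≤ (str f (k+1)).length := List.toFinset_card_le _
        _ = k + 1 := str_length f (k+1)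
        _ < k + 3 := by omega
    · have := omG_out {x | x ≠ k} (str f (k+1))
      rw [str_length, ffn_ne k (k+1) (by omega)] at this
      refine ⟨_, this, ?_⟩
      simp [ansC, str_length]

/-! ### `𝓖` is not PSD[T]-learnable -/

lemma getD_agree {l₁ l₂ : List ℕ} (h : l₁ <+: l₂) {j : ℕ} (hj : j < l₁.length) :
    l₂.getD j 0 = l₁.getD j 0 := by
  obtain ⟨t, rfl⟩ := h
  rw [List.getD_append _ _ _ _ hj]

/-- Enumeration of `ℕ \ {k}`. -/
def eFun (k j : ℕ) : ℕ := if j < k then j else j + 1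

/-- Enumeration of `ℕ \ {k}` starting with the string `σ₀`. -/
def gFun (σ₀ : List ℕ) (k j : ℕ) : ℕ :=
  if j < σ₀.length then σ₀.getD j 0 else eFun k (j - σ₀.length)

lemma gFun_enum (σ₀ : List ℕ) (k : ℕ) (hσ : ∀ x ∈ σ₀, x ≠ k) :
    IsEnum (gFun σ₀ k) {x | x ≠ k} := by
  apply Set.eq_of_subset_of_subset
  · rintro x ⟨j, rfl⟩
    show gFun σ₀ k j ≠ k
    unfold gFun
    split
    · rename_i hj
      apply hσ
      rw [List.getD_eq_getElem _ _ hj]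
      exact List.getElem_mem _
    · unfold eFun
      split <;> omega
  · intro x hx
    have hx' : x ≠ k := hx
    rcases Nat.lt_or_ge x k with hlt | hge
    · refine ⟨x + σ₀.length, ?_⟩
      show gFun σ₀ k (x + σ₀.length) = x
      unfold gFun
      rw [if_neg (by omega), Nat.add_sub_cancel]
      unfold eFun
      rw [if_pos hlt]
    · have hgt : k < x := by omega
      refine ⟨(x - 1) + σ₀.length, ?_⟩
      show gFun σ₀ k ((x - 1) + σ₀.length) = x
      unfold gFun
      rw [if_neg (by omega), Nat.add_sub_cancel]
      unfold eFun
      rw [if_neg (by omega)]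
      omega

lemma gFun_str (σ₀ : List ℕ) (k : ℕ) : str (gFun σ₀ k) σ₀.length = σ₀ := by
  apply List.ext_getElem (by simp [str_length])
  intro j hj hj'
  rw [str_getElem _ (by simpa [str_length] using hj)]
  unfold gFun
  rw [if_pos hj']
  exact List.getD_eq_getElem _ _ hj'

lemma not_psdt_famG : ¬ PSDT famG := by
  rintro ⟨M, T, p, hL⟩
  classical
  -- Step 1: there is a "locking" string for `univ`.
  have hlock : ∃ σ₀ : List ℕ, ∀ τ : List ℕ, M.eval (T.t (σ₀ ++ τ)) = Part.some 0 := by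
    by_contra hcon
    push_neg at hcon
    choose τf hτf using hcon
    -- build a text of ℕ on which the learner never settles on 0
    let ρ : ℕ → List ℕ := fun i => Nat.rec [] (fun i ρi => (ρi ++ [i]) ++ τf (ρi ++ [i])) i
    have hρ : ∀ i, ρ (i+1) = (ρ i ++ [i]) ++ τf (ρ i ++ [i]) := fun i => rfl
    have hlen : ∀ i, (ρ i).length + 1 ≤ (ρ (i+1)).length := by
      intro i
      rw [hρ]
      simp
    have hchain : ∀ i j, i ≤ j → ρ i <+: ρ j := by
      intro i j hij
      induction j with
      | zero => rw [Nat.le_zero.1 hij]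
      | succ j ih =>
        rcases Nat.lt_or_ge i (j+1) with hlt | hge
        · refine (ih (by omega)).trans ?_
          rw [hρ]
          exact ((List.prefix_append _ _).trans (List.prefix_append _ _))
        · rw [Nat.le_antisymm hij hge]
    have hilen : ∀ i, i ≤ (ρ i).length := by
      intro i
      induction i with
      | zero => simp
      | succ i ih => have := hlen i; omega
    let f : ℕ → ℕ := fun j => (ρ (j+1)).getD j 0
    have hfval : ∀ i j, j < (ρ i).length → f j = (ρ i).getD j 0 := by
      intro i j hj
      show (ρ (j+1)).getD j 0 = (ρ i).getD j 0
      rcases le_total (j+1) i with hle | hle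
      · exact (getD_agree (hchain _ _ hle) (by have := hilen (j+1); omega)).symm
      · exact getD_agree (hchain _ _ hle) hj
    have hstr : ∀ i, str f (ρ i).length = ρ i := by
      intro i
      apply List.ext_getElem (by simp [str_length])
      intro j hj hj'
      rw [str_getElem f (by simpa [str_length] using hj)]
      rw [hfval i j (by simpa using hj')]
      exact List.getD_eq_getElem _ _ hj'
    have hval : ∀ i, f (ρ i).length = i := by
      intro i
      have hl : (ρ i).length < (ρ (i+1)).length := by have := hlen i; omega
      rw [hfval (i+1) _ hl, hρ]
      rw [List.getD_append _ _ _ _ (by simp)]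
      simp [List.getD]
    have henum : IsEnum f Set.univ := by
      rw [IsEnum, Set.eq_univ_iff_forall]
      intro n
      exact ⟨(ρ n).length, hval n⟩
    obtain ⟨h, hFh, n, hset, _⟩ := hL Set.univ ⟨0, famG_zero⟩ f henum
    have h0 : h = 0 := famG_eq_univ hFh
    subst h0
    -- contradiction at stage (ρ (n+1)).length
    have hm : n ≤ (ρ (n+1)).length := by
      have := hilen (n+1); omega
    have hth : M.eval (T.t (str f ((ρ (n+1)).length))) = Part.some 0 := hset _ hm
    rw [hstr (n+1), hρ] at hth
    exact hτf (ρ n ++ [n]) hth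
  obtain ⟨σ₀, hσ₀⟩ := hlock
  -- Step 2: fool the learner on ℕ \ {k} for a fresh k.
  set k : ℕ := σ₀.foldr max 0 + 1 with hk
  have hknot : ∀ x ∈ σ₀, x ≠ k := by
    intro x hmem hc
    have := le_foldr_max hmem
    omega
  obtain ⟨h, hFh, n, hset, _⟩ :=
    hL {x | x ≠ k} ⟨k+1, famG_succ k⟩ (gFun σ₀ k) (gFun_enum σ₀ k hknot)
  have hpre : σ₀ <+: str (gFun σ₀ k) (max n σ₀.length) := by
    have h2 := str_prefix (gFun σ₀ k) (le_max_right n σ₀.length)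
    rw [gFun_str] at h2
    exact h2
  obtain ⟨τ, hτ⟩ := hpre
  have h1 : M.eval (T.t (str (gFun σ₀ k) (max n σ₀.length))) = Part.some h :=
    hset _ (le_max_left _ _)
  rw [← hτ] at h1
  rw [hσ₀ τ] at h1
  have h0 : h = 0 := by
    have := Part.some_inj.1 h1
    omega
  subst h0
  rw [famG_zero] at hFh
  have : k ∈ ({x | x ≠ k} : Set ℕ) := hFh ▸ trivial
  exact this rfl

/-! ### The family `𝓗`: halting-time markers; PSD[T]-learnable but not PSD[O]-learnable -/

/-- The even numbers. -/
def Ev : Set ℕ := {x | x % 2 = 0}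

/-- `e`-th program halts (on input 0) within `s` steps. -/
def withinB (e s : ℕ) : Bool :=
  (Nat.Partrec.Code.evaln s (Denumerable.ofNat Nat.Partrec.Code e) 0).isSome

def within (e s : ℕ) : Prop := withinB e s = true

instance : DecidablePred (fun p : ℕ × ℕ => within p.1 p.2) := fun _ => by
  unfold within; infer_instance

lemma withinB_primrec : Primrec₂ withinB := by
  have h1 : Primrec fun p : ℕ × ℕ =>
      ((p.2, (Denumerable.ofNat Nat.Partrec.Code p.1)), 0) :=
    ((Primrec.snd.pair ((Primrec.ofNat _).comp Primrec.fst)).pair (Primrec.const 0))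
  exact (Primrec.option_isSome.comp (Nat.Partrec.Code.primrec_evaln.comp h1)).to₂

lemma within_mono {e s s' : ℕ} (hss : s ≤ s') (h : within e s) : within e s' := by
  unfold within withinB at *
  obtain ⟨x, hx⟩ := Option.isSome_iff_exists.1 h
  have : x ∈ Nat.Partrec.Code.evaln s' (Denumerable.ofNat Nat.Partrec.Code e) 0 :=
    Nat.Partrec.Code.evaln_mono hss hx
  rw [Option.isSome_iff_exists]
  exact ⟨x, this⟩

/-- The halting problem. -/
def KK (e : ℕ) : Prop := ∃ s, within e s

/-- `s` is the least number of steps within which program `e` halts. -/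
def LeastW (e s : ℕ) : Prop := within e s ∧ (s = 0 ∨ ¬ within e (s - 1))

lemma leastW_unique {e s s' : ℕ} (h : LeastW e s) (h' : LeastW e s') : s = s' := by
  by_contra hne
  rcases Nat.lt_or_ge s s' with hlt | hge
  · rcases h'.2 with h0 | hw
    · omega
    · exact hw (within_mono (by omega) h.1)
  · have hlt : s' < s := by omega
    rcases h.2 with h0 | hw
    · omega
    · exact hw (within_mono (by omega) h'.1)

/-- The least halting time. -/
noncomputable def wt (e : ℕ) : ℕ := sInf {s | within e s}

lemma leastW_wt {e : ℕ} (h : KK e) : LeastW e (wt e) := by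
  obtain ⟨s, hs⟩ := h
  have hne : {s | within e s}.Nonempty := ⟨s, hs⟩
  constructor
  · exact Nat.sInf_mem hne
  · by_cases h0 : wt e = 0
    · exact Or.inl h0
    · right
      intro hw
      have : wt e ≤ wt e - 1 := Nat.sInf_le hw
      omega

lemma leastW_KK {e s : ℕ} (h : LeastW e s) : KK e := ⟨s, h.1⟩

/-- The halting-time marker of program `e`. -/
def marker (e s : ℕ) : ℕ := 2 * Nat.pair e s + 1

lemma marker_odd (e s : ℕ) : marker e s % 2 = 1 := by unfold marker; omega

lemma marker_decode (e s : ℕ) :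
    (Nat.unpair ((marker e s - 1) / 2)).1 = e ∧ (Nat.unpair ((marker e s - 1) / 2)).2 = s := by
  unfold marker
  have : (2 * Nat.pair e s + 1 - 1) / 2 = Nat.pair e s := by omega
  rw [this]
  simp

/-- The marker set of `e`. -/
def MS (e : ℕ) : Set ℕ := {x | ∃ s, LeastW e s ∧ x = marker e s}

lemma MS_eq_of_KK {e : ℕ} (h : KK e) : MS e = {marker e (wt e)} := by
  apply Set.eq_of_subset_of_subset
  · rintro x ⟨s, hs, rfl⟩
    rw [leastW_unique hs (leastW_wt h)]
    rfl
  · rintro x rfl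
    exact ⟨wt e, leastW_wt h, rfl⟩

lemma MS_eq_of_not_KK {e : ℕ} (h : ¬ KK e) : MS e = ∅ := by
  apply Set.eq_empty_of_forall_notMem
  rintro x ⟨s, hs, rfl⟩
  exact h (leastW_KK hs)

/-- The family `𝓗`. -/
def famH : IndexedFamily where
  F := fun n => match n with
    | 0 => Ev
    | (e+1) => Ev ∪ MS e
  nonempty := fun n => by
    match n with
    | 0 => exact ⟨0, rfl⟩
    | (e+1) => exact ⟨0, Or.inl rfl⟩
  uce := by
    apply ComputablePred.to_re
    apply ComputablePred.computable_iff.2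
    refine ⟨fun p => (decide (p.1 % 2 = 0)) ||
      (Nat.casesOn p.2 false (fun e =>
        (decide (p.1 % 2 = 1)) &&
        (withinB e (Nat.unpair ((p.1 - 1) / 2)).2) &&
        (decide ((Nat.unpair ((p.1 - 1) / 2)).1 = e)) &&
        ((decide ((Nat.unpair ((p.1 - 1) / 2)).2 = 0)) ||
          !(withinB e ((Nat.unpair ((p.1 - 1) / 2)).2 - 1))))), ?_, ?_⟩
    · -- computability
      have hmod2 : Primrec fun p : ℕ × ℕ => decide (p.1 % 2 = 0) :=
        (Primrec.eq.comp (Primrec.nat_mod.comp Primrec.fst (Primrec.const 2)) (Primrec.const 0)).decide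
      have hup : Primrec fun q : (ℕ × ℕ) × ℕ => Nat.unpair ((q.1.1 - 1) / 2) :=
        Primrec.unpair.comp (Primrec.nat_div.comp
          (Primrec.nat_sub.comp (Primrec.fst.comp Primrec.fst) (Primrec.const 1))
          (Primrec.const 2))
      have hinner : Primrec₂ fun (p : ℕ × ℕ) (e : ℕ) =>
          ((decide (p.1 % 2 = 1)) &&
            (withinB e (Nat.unpair ((p.1 - 1) / 2)).2) &&
            (decide ((Nat.unpair ((p.1 - 1) / 2)).1 = e)) &&
            ((decide ((Nat.unpair ((p.1 - 1) / 2)).2 = 0)) ||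
              !(withinB e ((Nat.unpair ((p.1 - 1) / 2)).2 - 1)))) := by
        have c1 : Primrec fun q : (ℕ × ℕ) × ℕ => decide (q.1.1 % 2 = 1) :=
          (Primrec.eq.comp (Primrec.nat_mod.comp (Primrec.fst.comp Primrec.fst)
            (Primrec.const 2)) (Primrec.const 1)).decide
        have c2 : Primrec fun q : (ℕ × ℕ) × ℕ => withinB q.2 (Nat.unpair ((q.1.1 - 1) / 2)).2 :=
          withinB_primrec.comp Primrec.snd (Primrec.snd.comp hup)
        have c3 : Primrec fun q : (ℕ × ℕ) × ℕ => decide ((Nat.unpair ((q.1.1 - 1) / 2)).1 = q.2) :=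
          (Primrec.eq.comp (Primrec.fst.comp hup) Primrec.snd).decide
        have c4 : Primrec fun q : (ℕ × ℕ) × ℕ => decide ((Nat.unpair ((q.1.1 - 1) / 2)).2 = 0) :=
          (Primrec.eq.comp (Primrec.snd.comp hup) (Primrec.const 0)).decide
        have c5 : Primrec fun q : (ℕ × ℕ) × ℕ =>
            !(withinB q.2 ((Nat.unpair ((q.1.1 - 1) / 2)).2 - 1)) :=
          Primrec.not.comp (withinB_primrec.comp Primrec.snd
            (Primrec.pred.comp (Primrec.snd.comp hup)))
        have hb : Primrec₂ (· && ·) := Primrec.dom_bool₂ _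
        have hb' : Primrec₂ (· || ·) := Primrec.dom_bool₂ _
        exact (hb.comp (hb.comp (hb.comp c1 c2) c3) (hb'.comp c4 c5)).to₂
      have := Primrec.nat_casesOn Primrec.snd (Primrec.const false) hinner
      have hb' : Primrec₂ (· || ·) := Primrec.dom_bool₂ _
      exact (hb'.comp hmod2 this).to_comp
    · -- correctness
      funext p
      obtain ⟨x, n⟩ := p
      match n with
      | 0 =>
        show (x ∈ Ev) = _
        unfold Ev
        by_cases h : x % 2 = 0 <;> simp [h]
      | (e+1) =>
        show (x ∈ Ev ∪ MS e) = _
        simp only [Set.mem_union, Nat.rec]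
        by_cases hev : x % 2 = 0
        · simp [hev, Ev]
        · have hodd : x % 2 = 1 := by omega
          have hx : x ∈ Ev ↔ False := by simp [Ev, hev]
          simp only [hx, false_or]
          rw [eq_iff_iff]
          constructor
          · rintro ⟨s, hL, rfl⟩
            obtain ⟨h1, h2⟩ := marker_decode e s
            simp only [Bool.or_eq_true, Bool.and_eq_true, decide_eq_true_eq, Bool.not_eq_true']
            refine Or.inr ⟨⟨⟨marker_odd e s, by rw [h2]; exact hL.1⟩, h1⟩, ?_⟩
            rcases hL.2 with h0 | hw
            · left; rw [h2]; exact h0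
            · right; rw [h2]
              exact Bool.eq_false_iff.2 hw
          · intro hmem
            simp only [Bool.or_eq_true, Bool.and_eq_true, decide_eq_true_eq,
              Bool.not_eq_true'] at hmem
            rcases hmem with h0 | ⟨⟨⟨_, hw⟩, he⟩, hlast⟩
            · omega
            · set s := (Nat.unpair ((x - 1) / 2)).2 with hs
              refine ⟨s, ⟨hw, ?_⟩, ?_⟩
              · rcases hlast with h0 | hnw
                · left; exact h0
                · right; unfold within; simp [hnw]
              · -- x = marker e s
                unfold marker
                have hxe : x = 2 * ((x - 1) / 2) + 1 := by omega
                have : Nat.pair e s = (x - 1) / 2 := by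
                  rw [← he]
                  exact Nat.pair_unpair _
                omega

lemma famH_zero : famH.F 0 = Ev := rfl

lemma famH_succ (e : ℕ) : famH.F (e+1) = Ev ∪ MS e := rfl

lemma marker_not_Ev (e s : ℕ) : marker e s ∉ Ev := by
  have := marker_odd e s
  unfold Ev
  simp only [Set.mem_setOf_eq]
  omega

lemma famH_mi_Ev : famH.mi Ev = 0 := Nat.sInf_eq_zero.2 (Or.inl famH_zero)

lemma famH_index_unique {e d : ℕ} (he : KK e) (hd : famH.F d = famH.F (e+1)) : d = e + 1 := by
  have hme : marker e (wt e) ∈ famH.F (e+1) := by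
    rw [famH_succ, MS_eq_of_KK he]
    exact Or.inr rfl
  match d with
  | 0 =>
    exfalso
    rw [← hd] at hme
    exact marker_not_Ev _ _ hme
  | (d'+1) =>
    rw [famH_succ, famH_succ] at hd
    have : marker e (wt e) ∈ Ev ∪ MS d' := hd ▸ hme
    rcases this with h | h
    · exact absurd h (marker_not_Ev _ _)
    · obtain ⟨s, hL, hmm⟩ := h
      have hpair : Nat.pair d' s = Nat.pair e (wt e) := by
        unfold marker at hmm
        omega
      have : d' = e := by
        have := congrArg (fun n => (Nat.unpair n).1) hpair
        simpa using this
      omega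

lemma famH_mi_KK {e : ℕ} (he : KK e) : famH.mi (famH.F (e+1)) = e + 1 := by
  have : {n | famH.F n = famH.F (e+1)} = {e+1} := by
    ext d
    exact ⟨fun hd => famH_index_unique he hd, fun hd => by rw [Set.mem_singleton_iff.1 hd]; rfl⟩
  rw [IndexedFamily.mi, this, csInf_singleton]

/-! ### `𝓗` is PSD[T]-learnable -/

/-- The odd-filter predicate. -/
def pOdd : ℕ → Bool := fun x => decide (x % 2 = 1)

/-- The teacher for `𝓗`: pass on the odd numbers only. -/
def teachH : Teacher where
  t := fun σ => σ.filter pOdd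
  computable := by
    have hstep : Primrec₂ fun (_ : List ℕ) (p : ℕ × List ℕ) =>
        if p.1 % 2 = 1 then p.1 :: p.2 else p.2 := by
      have hc : PrimrecPred fun p : ℕ × List ℕ => p.1 % 2 = 1 :=
        Primrec.eq.comp (Primrec.nat_mod.comp Primrec.fst (Primrec.const 2)) (Primrec.const 1)
      exact ((Primrec.ite hc (Primrec.list_cons.comp Primrec.fst Primrec.snd)
        Primrec.snd).comp Primrec.snd).to₂
    have hfr := Primrec.list_foldr Primrec.id (Primrec.const ([] : List ℕ)) hstep
    apply Primrec.to_comp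
    apply hfr.of_eq
    have key : ∀ l : List ℕ,
        l.foldr (fun b s => if b % 2 = 1 then b :: s else s) [] = l.filter pOdd := by
      intro l
      induction l with
      | nil => rfl
      | cons x l ih =>
        rw [List.foldr_cons, ih, List.filter_cons]
        by_cases h : x % 2 = 1
        · rw [if_pos h, if_pos (by simpa [pOdd] using h)]
        · rw [if_neg h, if_neg (by simpa [pOdd] using h)]
    intro l
    exact key l
  mono := fun σ τ h => h.filter pOdd
  content_sub := fun σ x h => (List.mem_filter.1 h).1

/-- Decoding a marker into an index. -/
def decodeH (τ : List ℕ) : ℕ :=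
  (τ.head?.map (fun x => (Nat.unpair ((x - 1) / 2)).1 + 1)).getD 0

lemma decodeH_le (τ : List ℕ) : decodeH τ ≤ τ.foldr max 0 + 1 := by
  unfold decodeH
  match hτ : τ.head? with
  | none => simp
  | some x =>
    have hx : x ∈ τ := by
      match τ, hτ with
      | (y :: l), hτ =>
        rw [List.head?_cons, Option.some_inj] at hτ
        rw [hτ]
        exact List.mem_cons_self
    simp only [Option.map_some, Option.getD_some]
    have h1 : (Nat.unpair ((x - 1) / 2)).1 ≤ (x - 1) / 2 := Nat.unpair_left_le _
    have h2 := le_foldr_max hx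
    omega

/-- The learning machine for `𝓗`. -/
def machH : Machine where
  eval := fun τ => Part.some (decodeH τ)
  partrec := by
    apply Computable.partrec
    apply Primrec.to_comp
    unfold decodeH
    have h1 : Primrec₂ fun (_ : List ℕ) (x : ℕ) => (Nat.unpair ((x - 1) / 2)).1 + 1 :=
      (Primrec.succ.comp (Primrec.fst.comp (Primrec.unpair.comp
        (Primrec.nat_div.comp (Primrec.nat_sub.comp Primrec.snd (Primrec.const 1))
          (Primrec.const 2))))).to₂
    exact Primrec.option_getD.comp (Primrec.option_map Primrec.list_head? h1) (Primrec.const 0)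
  time := fun τ => Part.some (τ.length + τ.foldr max 0 + 2)
  time_dom := by intro σ; simp
  length_le_time := by
    intro σ t ht
    rw [Part.mem_some_iff] at ht
    omega
  size_le_time := by
    intro σ t h ht hh
    rw [Part.mem_some_iff] at ht hh
    subst ht hh
    have h1 := size_le_self (decodeH σ)
    have h2 := decodeH_le σ
    omega
  time_mono := by
    intro σ τ s t hp hs ht
    rw [Part.mem_some_iff] at hs ht
    subst hs ht
    have h1 := hp.length_le
    have h2 := foldr_max_le_of_prefix hp
    omega

lemma psdt_famH : PSDT famH := by
  refine ⟨machH, teachH, Polynomial.X + Polynomial.C 2, ?_⟩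
  have hpev : ∀ n, (Polynomial.X + Polynomial.C 2 : Polynomial ℕ).eval n = n + 2 := by
    intro n; simp
  intro A hA f hf
  obtain ⟨e₀, hFe⟩ := hA
  -- case analysis on the shape of A
  have hcases : A = Ev ∨ ∃ e, KK e ∧ A = Ev ∪ {marker e (wt e)} ∧ famH.F (e+1) = A := by
    match e₀, hFe with
    | 0, hFe => exact Or.inl hFe.symm
    | (e+1), hFe =>
      by_cases hK : KK e
      · right
        refine ⟨e, hK, ?_, hFe⟩
        rw [← hFe, famH_succ, MS_eq_of_KK hK]
      · left
        rw [← hFe, famH_succ, MS_eq_of_not_KK hK, Set.union_empty]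
  rcases hcases with hAE | ⟨e, hK, hAe, hFe1⟩
  · -- A = Ev : the teacher stream is always empty
    subst hAE
    have hfilter : ∀ m, teachH.t (str f m) = [] := by
      intro m
      apply List.filter_eq_nil_iff.2
      intro x hx
      have : x ∈ Ev := by
        rw [← hf]
        obtain ⟨i, _, rfl⟩ := mem_str.1 hx
        exact ⟨i, rfl⟩
      simp only [pOdd, decide_eq_true_eq]
      unfold Ev at this
      simp only [Set.mem_setOf_eq] at this
      omega
    refine ⟨0, famH_zero, 0, ?_, ?_⟩
    · intro m _
      show machH.eval (teachH.t (str f m)) = Part.some 0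
      rw [hfilter m]
      rfl
    · rw [famH_mi_Ev, hpev]
      show (teachH.t (str f 0)).toFinset.card < 0 + 2
      rw [hfilter]
      simp
  · -- A = Ev ∪ {marker}
    set mk : ℕ := marker e (wt e) with hmk
    have hmkA : mk ∈ A := by rw [hAe]; exact Or.inr rfl
    obtain ⟨P, hP⟩ : ∃ P, f P = mk := by
      have : mk ∈ Set.range f := by rw [hf]; exact hmkA
      exact this
    have honly : ∀ m, ∀ x ∈ teachH.t (str f m), x = mk := by
      intro m x hx
      have h1 := List.mem_filter.1 hx
      have hxA : x ∈ A := by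
        rw [← hf]
        obtain ⟨i, _, rfl⟩ := mem_str.1 h1.1
        exact ⟨i, rfl⟩
      have hodd : x % 2 = 1 := by
        have := h1.2
        simpa [pOdd] using this
      rw [hAe] at hxA
      rcases hxA with hE | hM
      · exfalso; unfold Ev at hE; simp only [Set.mem_setOf_eq] at hE; omega
      · exact hM
    have hne : ∀ m, P + 1 ≤ m → mk ∈ teachH.t (str f m) := by
      intro m hm
      apply List.mem_filter.2
      constructor
      · exact mem_str.2 ⟨P, by omega, hP⟩
      · simp only [pOdd, decide_eq_true_eq]
        rw [hmk]
        exact marker_odd e (wt e)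
    have heval : ∀ m, P + 1 ≤ m → machH.eval (teachH.t (str f m)) = Part.some (e+1) := by
      intro m hm
      have hnonnil : teachH.t (str f m) ≠ [] := fun hc => by
        have := hne m hm; rw [hc] at this; exact (List.not_mem_nil this)
      show Part.some (decodeH _) = _
      unfold decodeH
      rw [List.head?_eq_head hnonnil]
      have hhd : (teachH.t (str f m)).head hnonnil = mk :=
        honly m _ (List.head_mem hnonnil)
      rw [hhd]
      simp only [Option.map_some, Option.getD_some]
      rw [hmk]
      obtain ⟨hd1, _⟩ := marker_decode e (wt e)
      rw [hd1]
    refine ⟨e+1, hFe1, P+1, ?_, ?_⟩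
    · intro m hm
      exact heval m hm
    · -- card bound
      have hsub : (teachH.t (str f (P+1))).toFinset ⊆ {mk} := by
        intro x hx
        rw [List.mem_toFinset] at hx
        rw [Finset.mem_singleton]
        exact honly _ _ hx
      have hcard : (teachH.t (str f (P+1))).toFinset.card ≤ 1 :=
        le_trans (Finset.card_le_card hsub) (by simp)
      have hmi : famH.mi A = e + 1 := by rw [← hFe1, famH_mi_KK hK]
      rw [hmi, hpev]
      show (teachH.t (str f (P+1))).toFinset.card < e + 1 + 2
      omega

/-! ### Simulation of the interaction with the oracle `Ev`, and determinism -/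

/-- Determinism: the next answer after a reachable answer string is unique. -/
lemma reach_next {M : OMachine} {A : Set ℕ} {σ : List ℕ} {a : List Bool}
    (h : M.Reach A σ a) :
    ∀ b₀ c, b₀ ++ [c] <+: a → ∃ q, (2 * q) ∈ M.step (σ, b₀) ∧ (c = true ↔ q ∈ A) := by
  induction h with
  | nil =>
    intro b₀ c hc
    exfalso
    have := hc.length_le
    simp at this
  | @query a₀ q hr hq ih =>
    intro b₀ c hc
    rcases List.prefix_concat_iff.1 hc with heq | hpre
    · have h2 : b₀ ++ [c] = a₀ ++ [decide (q ∈ A)] := heq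
      rw [← List.concat_eq_append, ← List.concat_eq_append, List.concat_inj] at h2
      refine ⟨q, h2.1 ▸ hq, ?_⟩
      rw [h2.2]
      simp
    · exact ih b₀ c hpre

/-- Helper for `reach_comparable`: a proper prefix extends by one element. -/
lemma prefix_eq_or_concat {α : Type*} {l₁ l₂ : List α} (h : l₁ <+: l₂) :
    l₂ = l₁ ∨ ∃ c, l₁ ++ [c] <+: l₂ := by
  obtain ⟨t, rfl⟩ := h
  match t with
  | [] => exact Or.inl (by simp)
  | (c :: t') =>
    right
    exact ⟨c, ⟨t', by simp⟩⟩

/-- Determinism: reachable answer strings are comparable. -/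
lemma reach_comparable {M : OMachine} {A : Set ℕ} {σ : List ℕ} {a b : List Bool}
    (ha : M.Reach A σ a) (hb : M.Reach A σ b) : a <+: b ∨ b <+: a := by
  induction hb with
  | nil => exact Or.inr (List.nil_prefix)
  | @query b₀ q hr hq ih =>
    rcases ih with h | h
    · exact Or.inl (h.trans (List.prefix_append _ _))
    · rcases prefix_eq_or_concat h with heq | hcp
      · exact Or.inl (heq ▸ List.prefix_append _ _)
      · obtain ⟨c, hc⟩ := hcp
        obtain ⟨q', hq', hcq⟩ := reach_next ha b₀ c hc
        have : (2 * q : ℕ) = 2 * q' := Part.mem_unique hq hq'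
        have hqq : q = q' := by omega
        subst hqq
        have hcd : c = decide (q ∈ A) := by
          by_cases hqa : q ∈ A
          · simp [hqa, hcq.2 hqa]
          · have h1 : c = false := by
              cases c
              · rfl
              · exact absurd (hcq.1 rfl) hqa
            simp [h1, hqa]
        rw [← hcd]
        exact Or.inr hc

/-- Determinism of the halting hypothesis. -/
lemma out_unique {M : OMachine} {A : Set ℕ} {σ : List ℕ} {h h' : ℕ} {a a' : List Bool}
    (ho : M.Out A σ h a) (ho' : M.Out A σ h' a') : h = h' := by
  obtain ⟨hra, hha⟩ := ho
  obtain ⟨hra', hha'⟩ := ho'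
  have key : ∀ {u v : ℕ} {x y : List Bool}, M.Reach A σ x → M.Reach A σ y →
      (2 * u + 1) ∈ M.step (σ, x) → (2 * v + 1) ∈ M.step (σ, y) → x <+: y → u = v := by
    intro u v x y hx hy hu hv hpre
    rcases prefix_eq_or_concat hpre with heq | ⟨c, hc⟩
    · subst heq
      have := Part.mem_unique hu hv
      omega
    · obtain ⟨q, hq, _⟩ := reach_next hy x c hc
      have := Part.mem_unique hu hq
      omega
  rcases reach_comparable hra hra' with hp | hp
  · exact key hra hra' hha hha' hp
  · exact (key hra' hra hha' hha hp).symm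

/-- The (computable) answers of the oracle for `Ev` on the query list `qs`. -/
def ansE (qs : List ℕ) : List Bool := qs.map fun q => decide (q % 2 = 0)

lemma ansE_eq (qs : List ℕ) : ansE qs = qs.map fun q => decide (q ∈ Ev) := by
  apply List.map_congr_left
  intro q _
  exact decide_eq_decide.2 Iff.rfl

/-- The query strings produced by running `M` on `σ` against the oracle `Ev`. -/
inductive RunE (M : OMachine) (σ : List ℕ) : List ℕ → Prop
  | nil : RunE M σ []
  | query {qs q} : RunE M σ qs → (2 * q) ∈ M.step (σ, ansE qs) → RunE M σ (qs ++ [q])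

lemma runE_reach {M : OMachine} {A : Set ℕ} {σ : List ℕ} {qs : List ℕ}
    (hr : RunE M σ qs) (hag : ∀ q ∈ qs, (q ∈ A ↔ q ∈ Ev)) :
    M.Reach A σ (ansE qs) := by
  induction hr with
  | nil => exact OMachine.Reach.nil
  | @query qs q hr hq ih =>
    have h1 : M.Reach A σ (ansE qs) :=
      ih fun q' hq' => hag q' (List.mem_append_left _ hq')
    have h2 := OMachine.Reach.query h1 hq
    have h3 : ansE (qs ++ [q]) = ansE qs ++ [decide (q ∈ A)] := by
      unfold ansE
      rw [List.map_append]
      congr 1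
      simp only [List.map_cons, List.map_nil, List.cons.injEq, and_true]
      refine decide_eq_decide.2 ?_
      exact Iff.symm (hag q (List.mem_append_right _ (List.mem_singleton_self q)))
    rw [h3]
    exact h2

lemma reach_runE {M : OMachine} {σ : List ℕ} {a : List Bool}
    (hr : M.Reach Ev σ a) : ∃ qs, RunE M σ qs ∧ ansE qs = a := by
  induction hr with
  | nil => exact ⟨[], RunE.nil, rfl⟩
  | @query a₀ q hr hq ih =>
    obtain ⟨qs, hrun, hans⟩ := ih
    rw [← hans] at hq
    refine ⟨qs ++ [q], RunE.query hrun hq, ?_⟩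
    have hstep : ansE (qs ++ [q]) = ansE qs ++ [decide (q % 2 = 0)] := by
      unfold ansE
      rw [List.map_append]
      rfl
    rw [hstep, hans]
    congr 1
    simp only [List.cons.injEq, and_true]
    exact decide_eq_decide.2 Iff.rfl

/-- One step of the (computable) simulation of `M` against the oracle `Ev`. -/
def Fsim (M : OMachine) : (List ℕ × List ℕ) →. ((ℕ × List ℕ) ⊕ (List ℕ × List ℕ)) :=
  fun sq => (M.step (sq.1, ansE sq.2)).map fun v =>
    if v % 2 = 1 then Sum.inl ((v - 1) / 2, sq.2) else Sum.inr (sq.1, sq.2 ++ [v / 2])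

lemma Fsim_partrec (M : OMachine) : Partrec (Fsim M) := by
  have hansE : Primrec ansE := by
    unfold ansE
    exact Primrec.list_map Primrec.id
      ((Primrec.eq.comp (Primrec.nat_mod.comp (Primrec.snd :
          Primrec fun y : List ℕ × ℕ => y.2) (Primrec.const 2))
        (Primrec.const 0)).decide.to₂)
  have hin : Computable fun sq : List ℕ × List ℕ => (sq.1, ansE sq.2) :=
    (Primrec.pair Primrec.fst (hansE.comp Primrec.snd)).to_comp
  have hpost : Computable₂ fun (sq : List ℕ × List ℕ) (v : ℕ) =>
      if v % 2 = 1 then (Sum.inl ((v - 1) / 2, sq.2) : (ℕ × List ℕ) ⊕ (List ℕ × List ℕ))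
      else Sum.inr (sq.1, sq.2 ++ [v / 2]) := by
    apply Primrec.to_comp
    have hc : PrimrecPred fun y : (List ℕ × List ℕ) × ℕ => y.2 % 2 = 1 :=
      Primrec.eq.comp (Primrec.nat_mod.comp Primrec.snd (Primrec.const 2)) (Primrec.const 1)
    have hl : Primrec fun y : (List ℕ × List ℕ) × ℕ =>
        (Sum.inl (((y.2 - 1) / 2), y.1.2) : (ℕ × List ℕ) ⊕ (List ℕ × List ℕ)) :=
      Primrec.sumInl.comp ((Primrec.nat_div.comp
        (Primrec.nat_sub.comp Primrec.snd (Primrec.const 1)) (Primrec.const 2)).pair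
        (Primrec.snd.comp Primrec.fst))
    have hr : Primrec fun y : (List ℕ × List ℕ) × ℕ =>
        (Sum.inr (y.1.1, y.1.2 ++ [y.2 / 2]) : (ℕ × List ℕ) ⊕ (List ℕ × List ℕ)) :=
      Primrec.sumInr.comp ((Primrec.fst.comp Primrec.fst).pair
        (Primrec.list_append.comp (Primrec.snd.comp Primrec.fst)
          (Primrec.list_cons.comp (Primrec.nat_div.comp Primrec.snd (Primrec.const 2))
            (Primrec.const []))))
    exact (Primrec.ite hc hl hr).to₂
  exact (M.partrec.comp hin).map hpost

lemma fix_fwd_runE {M : OMachine} {σ : List ℕ} {qs : List ℕ} (hr : RunE M σ qs) :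
    ∀ r, r ∈ PFun.fix (Fsim M) (σ, qs) → r ∈ PFun.fix (Fsim M) (σ, []) := by
  induction hr with
  | nil => intro r hr; exact hr
  | @query qs q hrun hq ih =>
    intro r hrfix
    apply ih
    apply PFun.mem_fix_iff.2
    right
    refine ⟨(σ, qs ++ [q]), ?_, hrfix⟩
    show _ ∈ (M.step ((σ, qs).1, ansE (σ, qs).2)).map _
    apply (Part.mem_map_iff _).2
    refine ⟨2 * q, hq, ?_⟩
    rw [if_neg (by omega)]
    have : 2 * q / 2 = q := by omega
    rw [this]

lemma halt_mem_fix {M : OMachine} {σ : List ℕ} {qs : List ℕ} {h : ℕ}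
    (hr : RunE M σ qs) (hh : (2 * h + 1) ∈ M.step (σ, ansE qs)) :
    (h, qs) ∈ PFun.fix (Fsim M) (σ, []) := by
  apply fix_fwd_runE hr
  apply PFun.mem_fix_iff.2
  left
  show _ ∈ (M.step ((σ, qs).1, ansE (σ, qs).2)).map _
  apply (Part.mem_map_iff _).2
  refine ⟨2 * h + 1, hh, ?_⟩
  rw [if_pos (by omega)]
  have : (2 * h + 1 - 1) / 2 = h := by omega
  rw [this]

lemma fix_sound {M : OMachine} {σ : List ℕ} {h : ℕ} {qs : List ℕ}
    (hmem : (h, qs) ∈ PFun.fix (Fsim M) (σ, [])) :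
    RunE M σ qs ∧ (2 * h + 1) ∈ M.step (σ, ansE qs) := by
  have main : ∀ st : List ℕ × List ℕ, (h, qs) ∈ PFun.fix (Fsim M) st →
      st.1 = σ → RunE M σ st.2 → RunE M σ qs ∧ (2 * h + 1) ∈ M.step (σ, ansE qs) := by
    intro st hst
    refine PFun.fixInduction (C := fun st' => st'.1 = σ → RunE M σ st'.2 →
      RunE M σ qs ∧ (2 * h + 1) ∈ M.step (σ, ansE qs)) hst ?_
    intro st' hfix ih
    · intro hσ hrun
      rcases PFun.mem_fix_iff.1 hfix with hstop | ⟨st'', hstep, hfix''⟩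
      · -- halting case
        obtain ⟨v, hv, hpost⟩ := (Part.mem_map_iff _).1 hstop
        by_cases hodd : v % 2 = 1
        · rw [if_pos hodd] at hpost
          have h1 : (v - 1) / 2 = h ∧ st'.2 = qs := by
            have := Sum.inl.inj hpost
            exact ⟨congrArg Prod.fst this, congrArg Prod.snd this⟩
          obtain ⟨hv1, hv2⟩ := h1
          subst hv2
          have hveq : v = 2 * h + 1 := by omega
          rw [hσ] at hv
          rw [hveq] at hv
          exact ⟨hrun, hv⟩
        · rw [if_neg hodd] at hpost
          exact absurd hpost (by simp)
      · -- query case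
        obtain ⟨v, hv, hpost⟩ := (Part.mem_map_iff _).1 hstep
        by_cases hodd : v % 2 = 1
        · rw [if_pos hodd] at hpost
          exact absurd hpost (by simp)
        · rw [if_neg hodd] at hpost
          have hst'' : st'' = (st'.1, st'.2 ++ [v / 2]) := (Sum.inr.inj hpost).symm
          have hq : (2 * (v / 2)) ∈ M.step (σ, ansE st'.2) := by
            have : 2 * (v / 2) = v := by omega
            rw [this, ← hσ]
            exact hv
          have hrun'' : RunE M σ (st'.2 ++ [v / 2]) := RunE.query hrun hq
          have := ih st'' hstep
          rw [hst''] at this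
          exact this hσ hrun''
  exact main (σ, []) hmem rfl RunE.nil

/-! ### `𝓗` is not PSD[O]-learnable -/

/-- The standard enumeration of the even numbers. -/
def fE : ℕ → ℕ := fun i => 2 * i

lemma fE_enum : IsEnum fE Ev := by
  apply Set.eq_of_subset_of_subset
  · rintro x ⟨i, rfl⟩
    show (2 * i) % 2 = 0
    omega
  · intro x hx
    have hx' : x % 2 = 0 := hx
    exact ⟨x / 2, by show 2 * (x / 2) = x; omega⟩

/-- Enumeration of `Ev ∪ {mk}` that agrees with `fE` below `B` and puts `mk` at `B`. -/
def gMk (B mk : ℕ) : ℕ → ℕ := fun i =>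
  if i < B then 2 * i else if i = B then mk else 2 * (i - B - 1)

lemma gMk_enum (B mk : ℕ) : IsEnum (gMk B mk) (Ev ∪ {mk}) := by
  apply Set.eq_of_subset_of_subset
  · rintro x ⟨i, rfl⟩
    unfold gMk
    split
    · exact Or.inl (by show (2 * i) % 2 = 0; omega)
    · split
      · exact Or.inr rfl
      · exact Or.inl (by show (2 * _) % 2 = 0; omega)
  · rintro x (hx | hx)
    · have hx' : x % 2 = 0 := hx
      refine ⟨B + 1 + x / 2, ?_⟩
      unfold gMk
      rw [if_neg (by omega), if_neg (by omega)]
      omega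
    · exact ⟨B, by unfold gMk; rw [if_neg (by omega), if_pos rfl]; exact hx.symm⟩

lemma gMk_str (B mk m : ℕ) (h : m ≤ B) : str (gMk B mk) m = str fE m := by
  apply List.ext_getElem (by simp [str_length])
  intro i hi hi'
  rw [str_getElem _ (by simpa [str_length] using hi),
    str_getElem _ (by simpa [str_length] using hi)]
  have : i < B := by have := hi; simp [str_length] at this; omega
  unfold gMk fE
  rw [if_pos this]

/-- Bounded search for halting. -/
def anyW (e m : ℕ) : Bool := (List.range (m+1)).foldr (fun s acc => acc || withinB e s) false

lemma foldr_or_iff (e : ℕ) : ∀ L : List ℕ,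
    (L.foldr (fun s acc => acc || withinB e s) false = true) ↔ ∃ s ∈ L, within e s := by
  intro L
  induction L with
  | nil => simp
  | cons s L ih =>
    simp only [List.foldr_cons, Bool.or_eq_true, ih, List.mem_cons]
    constructor
    · rintro (⟨s', hs', hw⟩ | hw)
      · exact ⟨s', Or.inr hs', hw⟩
      · exact ⟨s, Or.inl rfl, hw⟩
    · rintro ⟨s', (rfl | hs'), hw⟩
      · exact Or.inr hw
      · exact Or.inl ⟨s', hs', hw⟩

lemma anyW_iff (e m : ℕ) : anyW e m = true ↔ ∃ s, s ≤ m ∧ within e s := by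
  unfold anyW
  rw [foldr_or_iff]
  constructor
  · rintro ⟨s, hs, hw⟩
    exact ⟨s, by have := List.mem_range.1 hs; omega, hw⟩
  · rintro ⟨s, hs, hw⟩
    exact ⟨s, List.mem_range.2 (by omega), hw⟩

lemma anyW_primrec : Primrec₂ anyW := by
  have hf : Primrec fun em : ℕ × ℕ => List.range (em.2 + 1) :=
    Primrec.list_range.comp (Primrec.succ.comp Primrec.snd)
  have hh : Primrec₂ fun (em : ℕ × ℕ) (p : ℕ × Bool) => p.2 || withinB em.1 p.1 := by
    have := Primrec.dom_bool₂ (· || ·)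
    exact (this.comp (Primrec.snd.comp Primrec.snd)
      (withinB_primrec.comp (Primrec.fst.comp Primrec.fst) (Primrec.fst.comp Primrec.snd))).to₂
  exact (Primrec.list_foldr hf (Primrec.const false) hh).to₂

lemma not_psdo_famH : ¬ PSDO famH := by
  rintro ⟨M, p, hl⟩
  classical
  obtain ⟨h₀, hF0, n₀, hsetE, -, -⟩ := hl Ev ⟨0, famH_zero⟩ fE fE_enum
  -- the per-index budget
  set Bf : ℕ → ℕ := fun e => max n₀ (p.eval (e+1)) with hBf
  have hBf_comp : Computable Bf :=
    Primrec.nat_max.to_comp.comp (Computable.const n₀)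
      ((poly_eval_computable p).comp Computable.succ)
  -- inputs for the simulation
  set σf : ℕ → List ℕ := fun e => str fE (Bf e) with hσf
  have hσf_comp : Computable σf := by
    have h1 : Primrec fun b : ℕ => (List.range b).map (fun i => 2 * i) :=
      Primrec.list_map Primrec.list_range (Primrec.nat_double.comp Primrec.snd).to₂
    exact (h1.to_comp.comp hBf_comp).of_eq fun e => rfl
  -- the simulated run against the Ev-oracle
  set pfixf : ℕ →. (ℕ × List ℕ) := fun e => PFun.fix (Fsim M) (σf e, []) with hpfixf
  have hpfix_partrec : Partrec pfixf :=
    ((Fsim_partrec M).fix).comp (hσf_comp.pair (Computable.const []))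
  -- it is total, with first component h₀
  have htotal : ∀ e, ∃ qs, (h₀, qs) ∈ pfixf e := by
    intro e
    obtain ⟨ans, hout⟩ := hsetE (Bf e) (le_max_left _ _)
    obtain ⟨qs, hrun, hans⟩ := reach_runE hout.1
    have hh : (2 * h₀ + 1) ∈ M.step (σf e, ansE qs) := by
      rw [hans]
      exact hout.2
    exact ⟨qs, halt_mem_fix hrun hh⟩
  have hdom : ∀ e, (pfixf e).Dom := by
    intro e
    obtain ⟨qs, hqs⟩ := htotal e
    exact Part.dom_iff_mem.2 ⟨_, hqs⟩
  -- the value of the simulation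
  set valf : ℕ → ℕ × List ℕ := fun e => (pfixf e).get (hdom e) with hvalf
  have hvalf_comp : Computable valf := by
    have : Partrec fun e => Part.some (valf e) :=
      hpfix_partrec.of_eq fun e => (Part.some_get (hdom e)).symm
    exact this
  have hval_fst : ∀ e, (valf e).1 = h₀ := by
    intro e
    obtain ⟨qs, hqs⟩ := htotal e
    have h1 : valf e ∈ pfixf e := Part.get_mem (hdom e)
    have := Part.mem_unique h1 hqs
    rw [this]
  have hval_spec : ∀ e, RunE M (σf e) (valf e).2 ∧
      (2 * (valf e).1 + 1) ∈ M.step (σf e, ansE (valf e).2) := by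
    intro e
    have h1 : ((valf e).1, (valf e).2) ∈ PFun.fix (Fsim M) (σf e, []) := Part.get_mem (hdom e)
    exact fix_sound h1
  -- the candidate bound for the halting time
  set bf : ℕ → ℕ := fun e => (((valf e).2).map (fun q => (Nat.unpair ((q - 1) / 2)).2)).foldr max 0
    with hbf
  have hbf_comp : Computable bf := by
    have h1 : Primrec fun l : List ℕ =>
        (l.map (fun q => (Nat.unpair ((q - 1) / 2)).2)).foldr max 0 := by
      have hm : Primrec fun l : List ℕ => l.map (fun q => (Nat.unpair ((q - 1) / 2)).2) :=
        Primrec.list_map Primrec.id ((Primrec.snd.comp (Primrec.unpair.comp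
          (Primrec.nat_div.comp (Primrec.nat_sub.comp Primrec.snd (Primrec.const 1))
            (Primrec.const 2)))).to₂)
      have hfold : Primrec fun l : List ℕ => l.foldr max 0 :=
        Primrec.list_foldr Primrec.id (Primrec.const 0)
          ((Primrec.nat_max.comp (Primrec.fst.comp Primrec.snd)
            (Primrec.snd.comp Primrec.snd)).to₂)
      exact hfold.comp hm
    exact h1.to_comp.comp (Computable.snd.comp hvalf_comp)
  -- the decision procedure for KK
  set decf : ℕ → Bool := fun e => anyW e (bf e) with hdecf
  have hdecf_comp : Computable decf :=
    anyW_primrec.to_comp.comp Computable.id hbf_comp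
  -- main claim: decf decides KK
  have hmain : ∀ e, KK e ↔ decf e = true := by
    intro e
    constructor
    · intro he
      -- the marker must be queried by the simulated run
      set mk : ℕ := marker e (wt e) with hmk
      set A : Set ℕ := Ev ∪ {mk} with hA
      have hFA : famH.F (e+1) = A := by
        rw [famH_succ, MS_eq_of_KK he]
      have hmkA : mk ∈ A := Or.inr rfl
      have hmknotE : mk ∉ Ev := marker_not_Ev e (wt e)
      obtain ⟨h₁, hF1, n₁, hset1, hcard1, -⟩ :=
        hl A ⟨e+1, hFA⟩ (gMk (Bf e) mk) (gMk_enum (Bf e) mk)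
      have hmi : famH.mi A = e + 1 := by rw [← hFA]; exact famH_mi_KK he
      have hpB : p.eval (e+1) ≤ Bf e := le_max_right _ _
      rw [hmi] at hcard1
      -- the settling stage is at most `Bf e`
      have hn₁ : n₁ ≤ Bf e := by
        by_contra hgt
        push_neg at hgt
        have hsub : insert mk ((Finset.range (Bf e)).image (fun i => 2 * i)) ⊆
            (str (gMk (Bf e) mk) n₁).toFinset := by
          intro x hx
          rw [List.mem_toFinset]
          rcases Finset.mem_insert.1 hx with rfl | hx
          · apply mem_str.2
            refine ⟨Bf e, by omega, ?_⟩
            unfold gMk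
            rw [if_neg (by omega), if_pos rfl]
          · obtain ⟨i, hi, rfl⟩ := Finset.mem_image.1 hx
            rw [Finset.mem_range] at hi
            apply mem_str.2
            refine ⟨i, by omega, ?_⟩
            unfold gMk
            rw [if_pos hi]
        have hcardS : (insert mk ((Finset.range (Bf e)).image (fun i => 2 * i))).card
            = Bf e + 1 := by
          rw [Finset.card_insert_of_notMem, Finset.card_image_of_injective _
            (fun a b hab => by omega), Finset.card_range]
          intro hc
          obtain ⟨i, _, hi⟩ := Finset.mem_image.1 hc
          have := marker_odd e (wt e)
          rw [← hmk] at this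
          omega
        have h1 := Finset.card_le_card hsub
        rw [hcardS] at h1
        omega
      -- the learner halts correctly at stage `Bf e`
      obtain ⟨ans₁, hout₁⟩ := hset1 (Bf e) hn₁
      have hstrEq : str (gMk (Bf e) mk) (Bf e) = σf e := gMk_str _ _ _ le_rfl
      rw [hstrEq] at hout₁
      -- if the marker is never queried, the runs coincide: contradiction
      have hquery : mk ∈ (valf e).2 := by
        by_contra hnot
        have hag : ∀ q ∈ (valf e).2, (q ∈ A ↔ q ∈ Ev) := by
          intro q hq
          constructor
          · rintro (h | h)
            · exact h
            · exact absurd (Set.mem_singleton_iff.1 h ▸ hq) hnot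
          · exact fun h => Or.inl h
        obtain ⟨hrun, hhalt⟩ := hval_spec e
        have houtA : M.Out A (σf e) ((valf e).1) (ansE ((valf e).2)) :=
          ⟨runE_reach hrun hag, hhalt⟩
        have heq : h₁ = (valf e).1 := out_unique hout₁ houtA
        rw [hval_fst e] at heq
        subst heq
        rw [hF0] at hF1
        rw [← hF1] at hmkA
        exact hmknotE hmkA
      -- hence the halting time is bounded by `bf e`
      have hwt : wt e ≤ bf e := by
        have hmem : wt e ∈ ((valf e).2).map (fun q => (Nat.unpair ((q - 1) / 2)).2) := by
          apply List.mem_map.2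
          refine ⟨mk, hquery, ?_⟩
          rw [hmk]
          exact (marker_decode e (wt e)).2
        exact le_foldr_max hmem
      rw [hdecf]
      exact (anyW_iff e (bf e)).2 ⟨wt e, hwt, (leastW_wt he).1⟩
    · intro hd
      obtain ⟨s, _, hw⟩ := (anyW_iff e (bf e)).1 hd
      exact ⟨s, hw⟩
  -- KK is computable: contradiction with the halting problem
  have hKK : ComputablePred KK := by
    apply ComputablePred.computable_iff.2
    exact ⟨decf, hdecf_comp, funext fun e => propext (hmain e)⟩
  have hHalt : ComputablePred fun c : Nat.Partrec.Code => (c.eval 0).Dom := by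
    apply ComputablePred.computable_iff.2
    refine ⟨fun c => decf (Encodable.encode c), hdecf_comp.comp Computable.encode, ?_⟩
    funext c
    apply propext
    have h1 : KK (Encodable.encode c) ↔ (c.eval 0).Dom := by
      unfold KK within withinB
      rw [Denumerable.ofNat_encode]
      constructor
      · rintro ⟨s, hs⟩
        obtain ⟨x, hx⟩ := Option.isSome_iff_exists.1 hs
        have : x ∈ c.eval 0 := Nat.Partrec.Code.evaln_complete.2 ⟨s, hx⟩
        exact Part.dom_iff_mem.2 ⟨x, this⟩
      · intro hdom
        obtain ⟨x, hx⟩ := Part.dom_iff_mem.1 hdom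
        obtain ⟨s, hs⟩ := Nat.Partrec.Code.evaln_complete.1 hx
        exact ⟨s, Option.isSome_iff_exists.2 ⟨x, hs⟩⟩
    rw [← h1]
    exact hmain _
  exact ComputablePred.halting_problem 0 hHalt

/-- `PSD ⊊ PSD[O] ⊊ PSD[T,O]`, `PSD ⊊ PSD[T] ⊊ PSD[T,O]`,
`PSD[O] \ PSD[T] ≠ ∅` and `PSD[T] \ PSD[O] ≠ ∅`. -/
theorem stmt10 :
    ((∀ 𝓕 : IndexedFamily, PSD 𝓕 → PSDO 𝓕) ∧ (∃ 𝓕 : IndexedFamily, PSDO 𝓕 ∧ ¬ PSD 𝓕)) ∧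
    ((∀ 𝓕 : IndexedFamily, PSDO 𝓕 → PSDTO 𝓕) ∧ (∃ 𝓕 : IndexedFamily, PSDTO 𝓕 ∧ ¬ PSDO 𝓕)) ∧
    ((∀ 𝓕 : IndexedFamily, PSD 𝓕 → PSDT 𝓕) ∧ (∃ 𝓕 : IndexedFamily, PSDT 𝓕 ∧ ¬ PSD 𝓕)) ∧
    ((∀ 𝓕 : IndexedFamily, PSDT 𝓕 → PSDTO 𝓕) ∧ (∃ 𝓕 : IndexedFamily, PSDTO 𝓕 ∧ ¬ PSDT 𝓕)) ∧
    (∃ 𝓕 : IndexedFamily, PSDO 𝓕 ∧ ¬ PSDT 𝓕) ∧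
    (∃ 𝓕 : IndexedFamily, PSDT 𝓕 ∧ ¬ PSDO 𝓕) := by
  have hG_npsd : ¬ PSD famG := fun h => not_psdt_famG (psd_imp_psdt h)
  have hH_npsd : ¬ PSD famH := fun h => not_psdo_famH (psd_imp_psdo h)
  exact ⟨⟨fun 𝓕 => psd_imp_psdo, ⟨famG, psdo_famG, hG_npsd⟩⟩,
    ⟨fun 𝓕 => psdo_imp_psdto, ⟨famH, psdt_imp_psdto psdt_famH, not_psdo_famH⟩⟩,
    ⟨fun 𝓕 => psd_imp_psdt, ⟨famH, psdt_famH, hH_npsd⟩⟩,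
    ⟨fun 𝓕 => psdt_imp_psdto, ⟨famG, psdo_imp_psdto psdo_famG, not_psdt_famG⟩⟩,
    ⟨famG, psdo_famG, not_psdt_famG⟩, ⟨famH, psdt_famH, not_psdo_famH⟩⟩

end TeachLearn
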